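/- (Case 2 of the social-cost analysis.) Consider a facility-location instance with |N₁| ≥ |N₂| and |N₁ \ N₂| < |N₁ ∩ N₂|, and let m₁₂ be the median position of N₁ ∩ N₂. Then the solution w = (t(m₁₂), s(m₁₂)) satisfies SC(w) ≤ 11 · SC(y₁,y₂) for every feasible solution (y₁,y₂). -/

import Mathlib

open Finset

/-- The smallest element of `C` minimizing the distance to `p`. -/
noncomputable def tloc (C : Finset ℝ) (p : ℝ) : ℝ :=
  ((C.filter fun c => ∀ c' ∈ C, |p - c| ≤ |p - c'|).min).untopD 0

/-- The smallest element of `C \ {tloc C p}` minimizing the distance to `p`. -/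
noncomputable def sloc (C : Finset ℝ) (p : ℝ) : ℝ :=
  tloc (C.erase (tloc C p)) p

/-- The `⌈n/2⌉`-th smallest element of a multiset of reals (0 if empty). -/
noncomputable def medOf (l : Multiset ℝ) : ℝ :=
  (l.sort (· ≤ ·)).getD ((Multiset.card l + 1) / 2 - 1) 0

/-- The median position of the agents in `S` with positions `x`. -/
noncomputable def medianPos (S : Finset ℕ) (x : ℕ → ℝ) : ℝ :=
  medOf (S.val.map x)

/-- The Conditional-Median mechanism, assuming facility 1 is (weakly) more popular. -/
noncomputable def condMedian (x : ℕ → ℝ) (N1 N2 : Finset ℕ) (C : Finset ℝ) : ℝ × ℝ :=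
  if (N1 ∩ N2).card ≤ (N1 \ N2).card then
    let m1 := medianPos (N1 \ N2) x
    let m2 := medianPos N2 x
    let w1 := tloc C m1
    (w1, if tloc C m2 ≠ w1 then tloc C m2 else sloc C m2)
  else
    let m12 := medianPos (N1 ∩ N2) x
    (tloc C m12, sloc C m12)

/-- The output of the Conditional-Median mechanism (roles swapped if `|N₂| > |N₁|`). -/
noncomputable def mechOutput (x : ℕ → ℝ) (N1 N2 : Finset ℕ) (C : Finset ℝ) : ℝ × ℝ :=
  if N2.card ≤ N1.card then condMedian x N1 N2 C
  else (condMedian x N2 N1 C).swap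

/-- The cost of agent `i` at solution `y`: the distance to the farthest approved facility. -/
noncomputable def cost (x : ℕ → ℝ) (N1 N2 : Finset ℕ) (i : ℕ) (y : ℝ × ℝ) : ℝ :=
  if i ∈ N1 then
    if i ∈ N2 then max |x i - y.1| |x i - y.2| else |x i - y.1|
  else |x i - y.2|

/-- The social cost. -/
noncomputable def SC (x : ℕ → ℝ) (N1 N2 N : Finset ℕ) (y : ℝ × ℝ) : ℝ :=
  ∑ i ∈ N, cost x N1 N2 i y

/-- The max cost. -/
noncomputable def MC (x : ℕ → ℝ) (N1 N2 N : Finset ℕ) (hN : N.Nonempty) (y : ℝ × ℝ) : ℝ :=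
  N.sup' hN fun i => cost x N1 N2 i y

lemma tloc_spec (C : Finset ℝ) (p : ℝ) (hC : C.Nonempty) :
    tloc C p ∈ C ∧ ∀ c ∈ C, |p - tloc C p| ≤ |p - c| := by
  obtain ⟨c₀, hc₀, hmin⟩ := C.exists_min_image (fun c => |p - c|) hC
  have hF : (C.filter fun c => ∀ c' ∈ C, |p - c| ≤ |p - c'|).Nonempty :=
    ⟨c₀, Finset.mem_filter.mpr ⟨hc₀, hmin⟩⟩
  have h1 : tloc C p = (C.filter fun c => ∀ c' ∈ C, |p - c| ≤ |p - c'|).min' hF := by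
    rw [tloc, ← Finset.coe_min' hF, WithTop.untopD_coe]
  have h2 := Finset.min'_mem _ hF
  rw [Finset.mem_filter] at h2
  rw [h1]
  exact ⟨h2.1, h2.2⟩

lemma sloc_spec (C : Finset ℝ) (p : ℝ) (hC : 2 ≤ C.card) :
    sloc C p ∈ C ∧ sloc C p ≠ tloc C p ∧
      ∀ c ∈ C, c ≠ tloc C p → |p - sloc C p| ≤ |p - c| := by
  have hCne : C.Nonempty := Finset.card_pos.mp (by omega)
  have htC : tloc C p ∈ C := (tloc_spec C p hCne).1
  have hE : (C.erase (tloc C p)).Nonempty := by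
    rw [← Finset.card_pos, Finset.card_erase_of_mem htC]; omega
  obtain ⟨h1, h2⟩ := tloc_spec (C.erase (tloc C p)) p hE
  rw [Finset.mem_erase] at h1
  refine ⟨h1.2, h1.1, fun c hc hct => ?_⟩
  exact h2 c (Finset.mem_erase.mpr ⟨hct, hc⟩)

lemma pair_abs (a b m p : ℝ) (h1 : a ≤ m) (h2 : m ≤ b) :
    |a - m| + |b - m| ≤ |a - p| + |b - p| := by
  have h3 : |b - a| ≤ |b - p| + |p - a| := abs_sub_le b p a
  have h4 : |p - a| = |a - p| := abs_sub_comm p a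
  rw [abs_of_nonpos (by linarith), abs_of_nonneg (by linarith)]
  have h5 : b - a ≤ |b - a| := le_abs_self _
  linarith

lemma medOf_min (s : Multiset ℝ) (hs : s ≠ 0) (p : ℝ) :
    (s.map (fun a => |a - medOf s|)).sum ≤ (s.map (fun a => |a - p|)).sum := by
  set l := s.sort (· ≤ ·) with hl_def
  have hl : (l : Multiset ℝ) = s := Multiset.sort_eq _ _
  have hsort : l.Pairwise (· ≤ ·) := Multiset.pairwise_sort _ _
  set n := l.length with hn_def
  have hcard : Multiset.card s = n := by rw [← hl, Multiset.coe_card]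
  have hn : 0 < n := by
    rw [← hcard]
    exact Multiset.card_pos.mpr hs
  set k := (n + 1) / 2 - 1 with hk_def
  have hk : k < n := by omega
  have hm : medOf s = l.getD k 0 := by rw [medOf, ← hl_def, hcard]
  have hmono : ∀ i j : ℕ, i ≤ j → (hj : j < n) → l.getD i 0 ≤ l.getD j 0 := by
    intro i j hij hj
    have hi : i < n := lt_of_le_of_lt hij hj
    rw [List.getD_eq_getElem l 0 hi, List.getD_eq_getElem l 0 hj]
    have := hsort.rel_get_of_le (a := ⟨i, hi⟩) (b := ⟨j, hj⟩) hij
    simpa using this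
  have hconv : ∀ f : ℝ → ℝ, (s.map f).sum = ∑ i ∈ Finset.range n, f (l.getD i 0) := by
    intro f
    rw [← hl, Multiset.map_coe, Multiset.sum_coe]
    rw [← Fin.sum_univ_fun_getElem l f, ← Fin.sum_univ_eq_sum_range]
    apply Finset.sum_congr rfl
    intro i _
    rw [List.getD_eq_getElem l 0 i.isLt]
  rw [hconv, hconv, hm]
  have key : ∀ i ∈ Finset.range n,
      |l.getD i 0 - l.getD k 0| + |l.getD (n - 1 - i) 0 - l.getD k 0| ≤
      |l.getD i 0 - p| + |l.getD (n - 1 - i) 0 - p| := by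
    intro i hi
    rw [Finset.mem_range] at hi
    by_cases hik : i ≤ k
    · exact pair_abs _ _ _ _ (hmono i k hik hk) (hmono k (n - 1 - i) (by omega) (by omega))
    · have h := pair_abs (l.getD (n-1-i) 0) (l.getD i 0) (l.getD k 0) p
        (hmono (n-1-i) k (by omega) hk) (hmono k i (by omega) hi)
      linarith
  have hsum := Finset.sum_le_sum key
  rw [Finset.sum_add_distrib, Finset.sum_add_distrib] at hsum
  have hrefl1 : ∑ i ∈ Finset.range n, |l.getD (n - 1 - i) 0 - l.getD k 0| =
      ∑ i ∈ Finset.range n, |l.getD i 0 - l.getD k 0| :=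
    Finset.sum_range_reflect (fun i => |l.getD i 0 - l.getD k 0|) n
  have hrefl2 : ∑ i ∈ Finset.range n, |l.getD (n - 1 - i) 0 - p| =
      ∑ i ∈ Finset.range n, |l.getD i 0 - p| :=
    Finset.sum_range_reflect (fun i => |l.getD i 0 - p|) n
  rw [hrefl1, hrefl2] at hsum
  linarith

lemma medianPos_min (S : Finset ℕ) (x : ℕ → ℝ) (hS : S.Nonempty) (p : ℝ) :
    ∑ i ∈ S, |x i - medianPos S x| ≤ ∑ i ∈ S, |x i - p| := by
  have hs : S.val.map x ≠ 0 := by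
    rw [Ne, Multiset.map_eq_zero, Finset.val_eq_zero]
    exact hS.ne_empty
  have h := medOf_min (S.val.map x) hs p
  rw [Multiset.map_map, Multiset.map_map] at h
  exact h

lemma cost_nonneg (x : ℕ → ℝ) (N1 N2 : Finset ℕ) (i : ℕ) (y : ℝ × ℝ) :
    0 ≤ cost x N1 N2 i y := by
  unfold cost
  split_ifs
  · exact le_trans (abs_nonneg _) (le_max_left _ _)
  · exact abs_nonneg _
  · exact abs_nonneg _

/-- Case 2 of the social-cost analysis: when `|N₁| ≥ |N₂|` and `|N₁ \ N₂| < |N₁ ∩ N₂|`,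
the solution `(t(m₁₂), s(m₁₂))` is 11-approximate for the social cost. -/
theorem case_two_eleven_approx
    (N N1 N2 : Finset ℕ) (x : ℕ → ℝ) (C : Finset ℝ)
    (hN : N.Nonempty) (h1 : N1.Nonempty) (h2 : N2.Nonempty)
    (hU : N1 ∪ N2 = N) (hC : 2 ≤ C.card)
    (hcards : N2.card ≤ N1.card)
    (hcase : (N1 \ N2).card < (N1 ∩ N2).card)
    (y1 y2 : ℝ) (hy1 : y1 ∈ C) (hy2 : y2 ∈ C) (hy : y1 ≠ y2) :
    SC x N1 N2 N (tloc C (medianPos (N1 ∩ N2) x), sloc C (medianPos (N1 ∩ N2) x)) ≤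
      11 * SC x N1 N2 N (y1, y2) := by
  set T := N1 ∩ N2 with hT_def
  set m := medianPos T x with hm_def
  set t := tloc C m with ht_def
  set s := sloc C m with hs_def
  have hCne : C.Nonempty := Finset.card_pos.mp (by omega)
  obtain ⟨htC, htmin⟩ := tloc_spec C m hCne
  obtain ⟨hsC, hst, hsmin⟩ := sloc_spec C m hC
  have hT : T.Nonempty := Finset.card_pos.mp (by omega)
  have hTN : T ⊆ N := by
    rw [← hU]; exact Finset.inter_subset_left.trans Finset.subset_union_left
  set n := T.card with hn_def
  have hn : 0 < n := Finset.card_pos.mpr hT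
  set A := ∑ i ∈ T, cost x N1 N2 i (y1, y2) with hA_def
  have hcost_eq : ∀ i ∈ T, cost x N1 N2 i (y1, y2) = max |x i - y1| |x i - y2| := by
    intro i hi
    rw [Finset.mem_inter] at hi
    simp [cost, hi.1, hi.2]
  have hAy1 : ∑ i ∈ T, |x i - y1| ≤ A := by
    apply Finset.sum_le_sum
    intro i hi
    rw [hcost_eq i hi]
    exact le_max_left _ _
  have hAy2 : ∑ i ∈ T, |x i - y2| ≤ A := by
    apply Finset.sum_le_sum
    intro i hi
    rw [hcost_eq i hi]
    exact le_max_right _ _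
  have hL : ∑ i ∈ T, |x i - m| ≤ A := (medianPos_min T x hT y1).trans hAy1
  have key : ∀ z : ℝ, (∑ i ∈ T, |x i - z| ≤ A) → (n : ℝ) * |m - z| ≤ 2 * A := by
    intro z hz
    have hb : ∀ i ∈ T, |m - z| ≤ |x i - m| + |x i - z| := by
      intro i _
      have h := abs_sub_le m (x i) z
      rw [abs_sub_comm m (x i)] at h
      exact h
    have hsum := Finset.sum_le_sum hb
    rw [Finset.sum_const, nsmul_eq_mul, Finset.sum_add_distrib] at hsum
    linarith
  have hmy1 : (n : ℝ) * |m - y1| ≤ 2 * A := key y1 hAy1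
  have hmy2 : (n : ℝ) * |m - y2| ≤ 2 * A := key y2 hAy2
  have hms : (n : ℝ) * |m - s| ≤ 2 * A := by
    by_cases h : y1 = t
    · have hy2t : y2 ≠ t := fun hh => hy (h.trans hh.symm)
      have := hsmin y2 hy2 hy2t
      calc (n : ℝ) * |m - s| ≤ (n : ℝ) * |m - y2| :=
            mul_le_mul_of_nonneg_left this (by positivity)
        _ ≤ 2 * A := hmy2
    · have := hsmin y1 hy1 h
      calc (n : ℝ) * |m - s| ≤ (n : ℝ) * |m - y1| :=
            mul_le_mul_of_nonneg_left this (by positivity)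
        _ ≤ 2 * A := hmy1
  have hmt : |m - t| ≤ |m - s| := htmin s hsC
  -- T part
  have hTw : ∑ i ∈ T, cost x N1 N2 i (t, s) ≤ 3 * A := by
    have hb : ∀ i ∈ T, cost x N1 N2 i (t, s) ≤ |x i - m| + |m - s| := by
      intro i hi
      rw [Finset.mem_inter] at hi
      simp only [cost, hi.1, hi.2, if_true]
      apply max_le
      · calc |x i - t| ≤ |x i - m| + |m - t| := abs_sub_le _ _ _
          _ ≤ |x i - m| + |m - s| := by linarith
      · exact abs_sub_le _ _ _
    have hsum := Finset.sum_le_sum hb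
    rw [Finset.sum_add_distrib, Finset.sum_const, nsmul_eq_mul] at hsum
    linarith
  -- D part
  set D := N \ T with hD_def
  have hDcard : (D.card : ℝ) ≤ 2 * (n : ℝ) := by
    have e1 : (N1 \ N2).card + (N1 ∩ N2).card = N1.card := Finset.card_sdiff_add_card_inter N1 N2
    have e2 : (N2 \ N1).card + (N2 ∩ N1).card = N2.card := Finset.card_sdiff_add_card_inter N2 N1
    have e3 : (N2 ∩ N1).card = n := by rw [Finset.inter_comm]
    have e4 : (N1 ∪ N2).card + (N1 ∩ N2).card = N1.card + N2.card :=
      Finset.card_union_add_card_inter N1 N2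
    have e5 : D.card = N.card - n := Finset.card_sdiff_of_subset hTN
    have e6 : (N1 ∪ N2).card = N.card := by rw [hU]
    have e7 : (N1 ∩ N2).card = n := rfl
    have : D.card ≤ 2 * n := by omega
    exact_mod_cast this
  set c₀ := max |m - y1| |m - y2| + |m - s| with hc₀_def
  have hc₀_nonneg : 0 ≤ c₀ := by positivity
  have hnc₀ : (n : ℝ) * c₀ ≤ 4 * A := by
    have hmax : (n : ℝ) * max |m - y1| |m - y2| ≤ 2 * A := by
      rcases le_total |m - y1| |m - y2| with h | h
      · rw [max_eq_right h]; exact hmy2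
      · rw [max_eq_left h]; exact hmy1
    rw [hc₀_def, mul_add]
    linarith
  have hDb : ∀ i ∈ D, cost x N1 N2 i (t, s) ≤ cost x N1 N2 i (y1, y2) + c₀ := by
    intro i hi
    rw [hD_def, Finset.mem_sdiff] at hi
    obtain ⟨hiN, hiT⟩ := hi
    rw [← hU, Finset.mem_union] at hiN
    by_cases hi1 : i ∈ N1
    · have hi2 : i ∉ N2 := fun h => hiT (Finset.mem_inter.mpr ⟨hi1, h⟩)
      simp only [cost, hi1, hi2, if_true, if_false]
      have t1 : |x i - t| ≤ |x i - m| + |m - t| := abs_sub_le _ _ _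
      have t2 : |x i - m| ≤ |x i - y1| + |y1 - m| := abs_sub_le _ _ _
      have t3 : |y1 - m| = |m - y1| := abs_sub_comm _ _
      have t4 : |m - y1| ≤ max |m - y1| |m - y2| := le_max_left _ _
      linarith
    · have hi2 : i ∈ N2 := hiN.resolve_left hi1
      simp only [cost, hi1, if_false]
      have t1 : |x i - s| ≤ |x i - m| + |m - s| := abs_sub_le _ _ _
      have t2 : |x i - m| ≤ |x i - y2| + |y2 - m| := abs_sub_le _ _ _
      have t3 : |y2 - m| = |m - y2| := abs_sub_comm _ _
      have t4 : |m - y2| ≤ max |m - y1| |m - y2| := le_max_right _ _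
      linarith
  have hDw : ∑ i ∈ D, cost x N1 N2 i (t, s) ≤
      ∑ i ∈ D, cost x N1 N2 i (y1, y2) + 8 * A := by
    have hsum := Finset.sum_le_sum hDb
    rw [Finset.sum_add_distrib, Finset.sum_const, nsmul_eq_mul] at hsum
    have h8 : (D.card : ℝ) * c₀ ≤ 8 * A := by
      calc (D.card : ℝ) * c₀ ≤ (2 * (n : ℝ)) * c₀ :=
            mul_le_mul_of_nonneg_right hDcard hc₀_nonneg
        _ = 2 * ((n : ℝ) * c₀) := by ring
        _ ≤ 2 * (4 * A) := by linarith
        _ = 8 * A := by ring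
    linarith
  -- combine
  have hsplit : ∀ w : ℝ × ℝ, SC x N1 N2 N w =
      ∑ i ∈ D, cost x N1 N2 i w + ∑ i ∈ T, cost x N1 N2 i w := by
    intro w
    rw [SC, ← Finset.sum_sdiff hTN]
  have hDy_nonneg : 0 ≤ ∑ i ∈ D, cost x N1 N2 i (y1, y2) :=
    Finset.sum_nonneg fun i _ => cost_nonneg x N1 N2 i _
  rw [hsplit (t, s), hsplit (y1, y2)]
  linarith
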